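/- Let Γ be a finite connected A-graph with a vertex x_0 such that the induced homomorphism p_*: π_1(Γ, x_0) → π_1(R_A, v_0) ≅ F(A) of the unique label-preserving graph map p: Γ → R_A is surjective. Then there exists a finite sequence Γ = Γ_0, Γ_1, …, Γ_n = R_A of A-graphs such that each Γ_i is obtained from Γ_{i−1} by a single fold. -/

import Mathlib

/-!
STATEMENT 13 (Stallings): if Γ is a finite connected A-graph with base
vertex x₀ such that p₀ : π₁(Γ,x₀) → π₁(R_A) ≅ F(A) is surjective (i.e.
every element of F(A) is represented by the label of a closed walk at x₀),
then a finite sequence of folds transforms Γ into R_A.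
-/

/-- A finite `A`-graph for `A = {a₁,…,a_k}`: a finite directed graph with
edges labeled by elements of `Fin k`. -/
structure AGraph (k : ℕ) : Type 1 where
  V : Type
  E : Type
  finV : Finite V
  finE : Finite E
  o : E → V
  t : E → V
  lab : E → Fin k

namespace AGraph

variable {k : ℕ}

/-- The rose `R_A`: one vertex and `k` loop edges labeled `a₁,…,a_k`. -/
def RA (k : ℕ) : AGraph k where
  V := Unit
  E := Fin k
  finV := inferInstance
  finE := inferInstance
  o := fun _ => ()
  t := fun _ => ()
  lab := id

/-- A label-preserving morphism of `A`-graphs. -/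
structure Hom (Γ Δ : AGraph k) where
  onV : Γ.V → Δ.V
  onE : Γ.E → Δ.E
  map_o : ∀ e, Δ.o (onE e) = onV (Γ.o e)
  map_t : ∀ e, Δ.t (onE e) = onV (Γ.t e)
  map_lab : ∀ e, Δ.lab (onE e) = Γ.lab e

/-- Isomorphism of `A`-graphs. -/
def Iso (Γ Δ : AGraph k) : Prop :=
  ∃ φ : Hom Γ Δ, Function.Bijective φ.onV ∧ Function.Bijective φ.onE

/-- `Δ` is obtained from `Γ` by a single Stallings fold: two distinct edges
with the same label and the same initial (or the same terminal) vertex are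
identified, together with their terminal (resp. initial) vertices, and
nothing else is identified. -/
def IsFold (Γ Δ : AGraph k) : Prop :=
  ∃ φ : Hom Γ Δ, ∃ e₁ e₂ : Γ.E, e₁ ≠ e₂ ∧ Γ.lab e₁ = Γ.lab e₂ ∧
    Function.Surjective φ.onV ∧ Function.Surjective φ.onE ∧
    φ.onE e₁ = φ.onE e₂ ∧
    (∀ f f', φ.onE f = φ.onE f' →
      f = f' ∨ (f = e₁ ∧ f' = e₂) ∨ (f = e₂ ∧ f' = e₁)) ∧
    ((Γ.o e₁ = Γ.o e₂ ∧
        ∀ v v', φ.onV v = φ.onV v' →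
          v = v' ∨ (v = Γ.t e₁ ∧ v' = Γ.t e₂) ∨ (v = Γ.t e₂ ∧ v' = Γ.t e₁)) ∨
     (Γ.t e₁ = Γ.t e₂ ∧
        ∀ v v', φ.onV v = φ.onV v' →
          v = v' ∨ (v = Γ.o e₁ ∧ v' = Γ.o e₂) ∨ (v = Γ.o e₂ ∧ v' = Γ.o e₁)))

/-- The initial vertex of a step of a walk (an edge together with the
direction in which it is traversed). -/
def stepStart (Γ : AGraph k) (s : Γ.E × Bool) : Γ.V :=
  if s.2 then Γ.o s.1 else Γ.t s.1

/-- The terminal vertex of a step of a walk. -/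
def stepEnd (Γ : AGraph k) (s : Γ.E × Bool) : Γ.V :=
  if s.2 then Γ.t s.1 else Γ.o s.1

/-- A walk (edge-path) in `Γ`: consecutive steps match up. -/
def IsWalk (Γ : AGraph k) (l : List (Γ.E × Bool)) : Prop :=
  l.Chain' fun s s' => Γ.stepEnd s = Γ.stepStart s'

/-- The label of a walk, as a word in the letters `a_i^{±1}`. -/
def walkLabel (Γ : AGraph k) (l : List (Γ.E × Bool)) : List (Fin k × Bool) :=
  l.map fun s => (Γ.lab s.1, s.2)

/-- A walk from `v` to `w` (the empty walk only when `v = w`). -/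
def IsWalkFromTo (Γ : AGraph k) (v w : Γ.V) (l : List (Γ.E × Bool)) : Prop :=
  Γ.IsWalk l ∧ (∀ s ∈ l.head?, Γ.stepStart s = v) ∧
    (∀ s ∈ l.getLast?, Γ.stepEnd s = w) ∧ (l = [] → v = w)

/-- A word is readable in `Γ` if it is the label of some edge-path in `Γ`. -/
def Readable (Γ : AGraph k) (w : List (Fin k × Bool)) : Prop :=
  ∃ l : List (Γ.E × Bool), Γ.IsWalk l ∧ Γ.walkLabel l = w

/-- `Γ` is connected. -/
def Connected (Γ : AGraph k) : Prop :=
  ∀ v w : Γ.V, ∃ l, Γ.IsWalkFromTo v w l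

/-- The degree of a vertex (a loop at `v` contributes 2). -/
noncomputable def degree (Γ : AGraph k) (v : Γ.V) : ℕ :=
  Nat.card {e : Γ.E // Γ.o e = v} + Nat.card {e : Γ.E // Γ.t e = v}

/-- A core graph: finite, connected, and with no vertices of degree one. -/
def IsCore (Γ : AGraph k) : Prop :=
  Γ.Connected ∧ ∀ v : Γ.V, Γ.degree v ≠ 1

/-- `Γ` (assumed connected) has rank `r`, i.e. first Betti number
`|E| - |V| + 1 = r`. -/
def HasRank (Γ : AGraph k) (r : ℕ) : Prop :=
  Nat.card Γ.E + 1 = Nat.card Γ.V + r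

/-- `Γ` folds onto `R_A`: a finite sequence of folds transforms `Γ` into a
graph isomorphic to `R_A`. -/
def FoldsOntoRA (Γ : AGraph k) : Prop :=
  ∃ n : ℕ, ∃ seq : Fin (n + 1) → AGraph k, seq 0 = Γ ∧
    Iso (seq (Fin.last n)) (RA k) ∧
    ∀ i : Fin n, IsFold (seq i.castSucc) (seq i.succ)

end AGraph

namespace AGraph

variable {k : ℕ}

/-! ### Pair identification setoid -/

def pairRel {α : Type*} (a b : α) : α → α → Prop :=
  fun x y => x = y ∨ (x = a ∧ y = b) ∨ (x = b ∧ y = a)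

lemma pairRel_equiv {α : Type*} (a b : α) : Equivalence (pairRel a b) := by
  constructor
  · intro x; exact Or.inl rfl
  · intro x y h; rcases h with rfl | ⟨rfl, rfl⟩ | ⟨rfl, rfl⟩ <;> simp [pairRel]
  · intro x y z h1 h2
    rcases h1 with rfl | ⟨rfl, rfl⟩ | ⟨rfl, rfl⟩ <;>
      rcases h2 with rfl | ⟨h, rfl⟩ | ⟨h, rfl⟩ <;> simp_all [pairRel]

def pairSetoid {α : Type*} (a b : α) : Setoid α := ⟨pairRel a b, pairRel_equiv a b⟩

/-! ### Fold constructions -/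

def foldO (Γ : AGraph k) (e₁ e₂ : Γ.E) (ho : Γ.o e₁ = Γ.o e₂)
    (hlab : Γ.lab e₁ = Γ.lab e₂) : AGraph k where
  V := Quotient (pairSetoid (Γ.t e₁) (Γ.t e₂))
  E := Quotient (pairSetoid e₁ e₂)
  finV := by have := Γ.finV; exact Quotient.finite _
  finE := by have := Γ.finE; exact Quotient.finite _
  o := Quotient.lift (fun f => (⟦Γ.o f⟧ : Quotient (pairSetoid (Γ.t e₁) (Γ.t e₂))))
    (by rintro f f' (rfl | ⟨rfl, rfl⟩ | ⟨rfl, rfl⟩) <;> simp [ho])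
  t := Quotient.lift (fun f => (⟦Γ.t f⟧ : Quotient (pairSetoid (Γ.t e₁) (Γ.t e₂))))
    (by
      rintro f f' (rfl | ⟨rfl, rfl⟩ | ⟨rfl, rfl⟩)
      · rfl
      · exact Quotient.sound (Or.inr (Or.inl ⟨rfl, rfl⟩))
      · exact Quotient.sound (Or.inr (Or.inr ⟨rfl, rfl⟩)))
  lab := Quotient.lift Γ.lab
    (by rintro f f' (rfl | ⟨rfl, rfl⟩ | ⟨rfl, rfl⟩) <;> simp [hlab])

def foldOHom (Γ : AGraph k) (e₁ e₂ : Γ.E) (ho : Γ.o e₁ = Γ.o e₂)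
    (hlab : Γ.lab e₁ = Γ.lab e₂) : Hom Γ (Γ.foldO e₁ e₂ ho hlab) where
  onV := Quotient.mk _
  onE := Quotient.mk _
  map_o _ := rfl
  map_t _ := rfl
  map_lab _ := rfl

lemma isFold_foldO (Γ : AGraph k) (e₁ e₂ : Γ.E) (hne : e₁ ≠ e₂) (ho : Γ.o e₁ = Γ.o e₂)
    (hlab : Γ.lab e₁ = Γ.lab e₂) : IsFold Γ (Γ.foldO e₁ e₂ ho hlab) := by
  refine ⟨Γ.foldOHom e₁ e₂ ho hlab, e₁, e₂, hne, hlab, ?_, ?_, ?_, ?_, Or.inl ⟨ho, ?_⟩⟩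
  · exact fun q => Quotient.exists_rep q
  · exact fun q => Quotient.exists_rep q
  · exact Quotient.sound (Or.inr (Or.inl ⟨rfl, rfl⟩))
  · exact fun f f' h => Quotient.exact h
  · exact fun v v' h => Quotient.exact h

def foldT (Γ : AGraph k) (e₁ e₂ : Γ.E) (ht : Γ.t e₁ = Γ.t e₂)
    (hlab : Γ.lab e₁ = Γ.lab e₂) : AGraph k where
  V := Quotient (pairSetoid (Γ.o e₁) (Γ.o e₂))
  E := Quotient (pairSetoid e₁ e₂)
  finV := by have := Γ.finV; exact Quotient.finite _
  finE := by have := Γ.finE; exact Quotient.finite _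
  o := Quotient.lift (fun f => (⟦Γ.o f⟧ : Quotient (pairSetoid (Γ.o e₁) (Γ.o e₂))))
    (by
      rintro f f' (rfl | ⟨rfl, rfl⟩ | ⟨rfl, rfl⟩)
      · rfl
      · exact Quotient.sound (Or.inr (Or.inl ⟨rfl, rfl⟩))
      · exact Quotient.sound (Or.inr (Or.inr ⟨rfl, rfl⟩)))
  t := Quotient.lift (fun f => (⟦Γ.t f⟧ : Quotient (pairSetoid (Γ.o e₁) (Γ.o e₂))))
    (by rintro f f' (rfl | ⟨rfl, rfl⟩ | ⟨rfl, rfl⟩) <;> simp [ht])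
  lab := Quotient.lift Γ.lab
    (by rintro f f' (rfl | ⟨rfl, rfl⟩ | ⟨rfl, rfl⟩) <;> simp [hlab])

def foldTHom (Γ : AGraph k) (e₁ e₂ : Γ.E) (ht : Γ.t e₁ = Γ.t e₂)
    (hlab : Γ.lab e₁ = Γ.lab e₂) : Hom Γ (Γ.foldT e₁ e₂ ht hlab) where
  onV := Quotient.mk _
  onE := Quotient.mk _
  map_o _ := rfl
  map_t _ := rfl
  map_lab _ := rfl

lemma isFold_foldT (Γ : AGraph k) (e₁ e₂ : Γ.E) (hne : e₁ ≠ e₂) (ht : Γ.t e₁ = Γ.t e₂)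
    (hlab : Γ.lab e₁ = Γ.lab e₂) : IsFold Γ (Γ.foldT e₁ e₂ ht hlab) := by
  refine ⟨Γ.foldTHom e₁ e₂ ht hlab, e₁, e₂, hne, hlab, ?_, ?_, ?_, ?_, Or.inr ⟨ht, ?_⟩⟩
  · exact fun q => Quotient.exists_rep q
  · exact fun q => Quotient.exists_rep q
  · exact Quotient.sound (Or.inr (Or.inl ⟨rfl, rfl⟩))
  · exact fun f f' h => Quotient.exact h
  · exact fun v v' h => Quotient.exact h

/-! ### Pushing walks forward along a hom -/

def Hom.mapStep {Γ Δ : AGraph k} (φ : Hom Γ Δ) (s : Γ.E × Bool) : Δ.E × Bool :=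
  (φ.onE s.1, s.2)

lemma Hom.stepStart_mapStep {Γ Δ : AGraph k} (φ : Hom Γ Δ) (s : Γ.E × Bool) :
    Δ.stepStart (φ.mapStep s) = φ.onV (Γ.stepStart s) := by
  obtain ⟨e, b⟩ := s
  cases b <;> simp [stepStart, Hom.mapStep, φ.map_o, φ.map_t]

lemma Hom.stepEnd_mapStep {Γ Δ : AGraph k} (φ : Hom Γ Δ) (s : Γ.E × Bool) :
    Δ.stepEnd (φ.mapStep s) = φ.onV (Γ.stepEnd s) := by
  obtain ⟨e, b⟩ := s
  cases b <;> simp [stepEnd, Hom.mapStep, φ.map_o, φ.map_t]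

lemma Hom.walkLabel_map {Γ Δ : AGraph k} (φ : Hom Γ Δ) (l : List (Γ.E × Bool)) :
    Δ.walkLabel (l.map φ.mapStep) = Γ.walkLabel l := by
  simp only [walkLabel, List.map_map]
  exact List.map_congr_left fun s _ => by simp [Hom.mapStep, φ.map_lab]

lemma Hom.isWalkFromTo_map {Γ Δ : AGraph k} (φ : Hom Γ Δ) {v w : Γ.V}
    {l : List (Γ.E × Bool)} (hl : Γ.IsWalkFromTo v w l) :
    Δ.IsWalkFromTo (φ.onV v) (φ.onV w) (l.map φ.mapStep) := by
  obtain ⟨h1, h2, h3, h4⟩ := hl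
  refine ⟨?_, ?_, ?_, ?_⟩
  · rw [IsWalk, List.Chain', List.isChain_map]
    exact h1.imp fun a b hab => by rw [φ.stepEnd_mapStep, φ.stepStart_mapStep, hab]
  · intro s hs
    rw [List.head?_map] at hs
    cases hh : l.head? with
    | none => rw [hh] at hs; simp at hs
    | some a =>
        rw [hh] at hs; simp only [Option.map_some, Option.mem_def, Option.some.injEq] at hs
        subst hs; rw [φ.stepStart_mapStep, h2 a hh]
  · intro s hs
    rw [List.getLast?_map] at hs
    cases hh : l.getLast? with
    | none => rw [hh] at hs; simp at hs
    | some a =>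
        rw [hh] at hs; simp only [Option.map_some, Option.mem_def, Option.some.injEq] at hs
        subst hs; rw [φ.stepEnd_mapStep, h3 a hh]
  · intro hnil
    rw [List.map_eq_nil_iff] at hnil
    rw [h4 hnil]

/-! ### Folded graphs and walk reduction -/

def Folded (Γ : AGraph k) : Prop :=
  ∀ f f' : Γ.E, Γ.lab f = Γ.lab f' → (Γ.o f = Γ.o f' ∨ Γ.t f = Γ.t f') → f = f'

lemma step_walk {Γ : AGraph k} (hF : Γ.Folded) {v w : Γ.V}
    {L₁ L₂ : List (Fin k × Bool)} (hstep : FreeGroup.Red.Step L₁ L₂) :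
    ∀ l, Γ.IsWalkFromTo v w l → Γ.walkLabel l = L₁ →
      ∃ l', Γ.IsWalkFromTo v w l' ∧ Γ.walkLabel l' = L₂ := by
  induction hstep with
  | @not A B x b1 =>
    intro l hl hlab
    rw [walkLabel] at hlab
    obtain ⟨la, lb, rfl, hA, hB⟩ := List.map_eq_append_iff.1 hlab
    obtain ⟨s, lb', rfl, hs, hB'⟩ := List.map_eq_cons_iff.1 hB
    obtain ⟨s', l₂, rfl, hs', hB''⟩ := List.map_eq_cons_iff.1 hB'
    obtain ⟨e, b1⟩ := s
    obtain ⟨e', b2⟩ := s'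
    simp only [Prod.mk.injEq] at hs hs'
    obtain ⟨hle, rfl⟩ := hs
    obtain ⟨hle', rfl⟩ := hs'
    obtain ⟨hw, h2, h3, -⟩ := hl
    rw [IsWalk, List.Chain', List.isChain_append_cons_cons] at hw
    obtain ⟨hw1, hrel, hw2⟩ := hw
    -- show the two steps traverse the same edge and derive the key identity
    have hee : e = e' := by
      cases b1 with
      | true =>
          apply hF e e' (hle.trans hle'.symm)
          right
          simpa [stepEnd, stepStart] using hrel
      | false =>
          apply hF e e' (hle.trans hle'.symm)
          left
          simpa [stepEnd, stepStart] using hrel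
    subst hee
    have key : Γ.stepStart (e, b1) = Γ.stepEnd (e, !b1) := by
      cases b1 <;> simp [stepStart, stepEnd]
    have hwla : (la ++ [(e, b1)]).Chain' (fun s s' => Γ.stepEnd s = Γ.stepStart s') := hw1
    have hjun : ∀ a ∈ la.getLast?, Γ.stepEnd a = Γ.stepStart (e, b1) := by
      intro a ha
      have := (List.isChain_append.1 hw1).2.2 a ha (e, b1) rfl
      exact this
    have hla : la.Chain' (fun s s' => Γ.stepEnd s = Γ.stepStart s') :=
      (List.isChain_append.1 hw1).1
    have hl₂ : l₂.Chain' (fun s s' => Γ.stepEnd s = Γ.stepStart s') :=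
      (List.isChain_cons.1 hw2).2
    have hjun2 : ∀ y ∈ l₂.head?, Γ.stepEnd (e, !b1) = Γ.stepStart y :=
      (List.isChain_cons.1 hw2).1
    refine ⟨la ++ l₂, ⟨?_, ?_, ?_, ?_⟩, ?_⟩
    · exact List.IsChain.append hla hl₂ fun a ha y hy => by
        rw [hjun a ha, key, hjun2 y hy]
    · intro s hs
      rw [List.head?_append] at hs
      cases hla' : la.head? with
      | some a =>
          rw [hla'] at hs
          simp only [Option.some_or, Option.mem_def, Option.some.injEq] at hs
          subst hs
          apply h2
          cases la with
          | nil => simp at hla'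
          | cons a' la' =>
              simp only [List.head?_cons, Option.some.injEq] at hla'
              subst hla'; rfl
      | none =>
          rw [hla'] at hs
          simp only [Option.none_or] at hs
          have hlanil : la = [] := List.head?_eq_none_iff.1 hla'
          subst hlanil
          have hv : Γ.stepStart (e, b1) = v := h2 (e, b1) rfl
          rw [← hv, key, hjun2 s hs]
    · intro s hs
      rw [List.getLast?_append] at hs
      cases hl₂' : l₂.getLast? with
      | some a =>
          rw [hl₂'] at hs
          simp only [Option.some_or, Option.mem_def, Option.some.injEq] at hs
          subst hs
          apply h3
          obtain ⟨c, l₂', rfl⟩ : ∃ c l₂', l₂ = c :: l₂' := by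
            cases l₂ with
            | nil => simp at hl₂'
            | cons c l₂' => exact ⟨c, l₂', rfl⟩
          simp only [Option.mem_def, List.getLast?_append, List.getLast?_cons_cons]
          rw [hl₂']
          rfl
      | none =>
          rw [hl₂'] at hs
          simp only [Option.none_or] at hs
          have hl₂nil : l₂ = [] := List.getLast?_eq_none_iff.1 hl₂'
          subst hl₂nil
          have hw' : Γ.stepEnd (e, !b1) = w := by
            apply h3
            rw [List.getLast?_append]
            rfl
          rw [← hw', ← key, hjun s hs]
    · intro hnil
      rw [List.append_eq_nil_iff] at hnil
      obtain ⟨rfl, rfl⟩ := hnil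
      have hv : Γ.stepStart (e, b1) = v := h2 (e, b1) rfl
      have hw' : Γ.stepEnd (e, !b1) = w := by
        apply h3
        rfl
      rw [← hv, ← hw', key]
    · simp only [walkLabel, List.map_append]
      rw [hA, hB'']

lemma red_walk {Γ : AGraph k} (hF : Γ.Folded) {v w : Γ.V} :
    ∀ {L₁ L₂ : List (Fin k × Bool)}, FreeGroup.Red L₁ L₂ →
      ∀ l, Γ.IsWalkFromTo v w l → Γ.walkLabel l = L₁ →
        ∃ l', Γ.IsWalkFromTo v w l' ∧ Γ.walkLabel l' = L₂ := by
  intro L₁ L₂ h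
  induction h with
  | refl => exact fun l hl hlab => ⟨l, hl, hlab⟩
  | tail _ hstep ih =>
      intro l hl hlab
      obtain ⟨l', hl', hlab'⟩ := ih l hl hlab
      exact step_walk hF hstep l' hl' hlab'

/-! ### Folded + surjective ⇒ iso to rose -/

lemma exists_loops {Γ : AGraph k} (hF : Γ.Folded) (x₀ : Γ.V)
    (hsurj : ∀ g : FreeGroup (Fin k), ∃ l : List (Γ.E × Bool),
      Γ.IsWalkFromTo x₀ x₀ l ∧ FreeGroup.mk (Γ.walkLabel l) = g) (i : Fin k) :
    ∃ e : Γ.E, Γ.o e = x₀ ∧ Γ.t e = x₀ ∧ Γ.lab e = i := by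
  obtain ⟨l, hl, hmk⟩ := hsurj (FreeGroup.of i)
  have hmk' : FreeGroup.mk (Γ.walkLabel l) = FreeGroup.mk [(i, true)] := hmk
  have hred : FreeGroup.reduce (Γ.walkLabel l) = [(i, true)] := by
    rw [FreeGroup.reduce.sound hmk', FreeGroup.reduce_singleton]
  have hR : FreeGroup.Red (Γ.walkLabel l) [(i, true)] := by
    rw [← hred]; exact FreeGroup.reduce.red
  obtain ⟨l', hl', hlab'⟩ := red_walk hF hR l hl rfl
  rw [walkLabel] at hlab'
  obtain ⟨s, l'', rfl, hs, hnil⟩ := List.map_eq_cons_iff.1 hlab'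
  obtain ⟨e, b⟩ := s
  simp only [Prod.mk.injEq] at hs
  obtain ⟨hle, rfl⟩ := hs
  rw [List.map_eq_nil_iff] at hnil
  subst hnil
  obtain ⟨-, h2, h3, -⟩ := hl'
  have ho : Γ.o e = x₀ := h2 (e, true) rfl
  have ht : Γ.t e = x₀ := h3 (e, true) rfl
  exact ⟨e, ho, ht, hle⟩

lemma all_eq_base {Γ : AGraph k} (hF : Γ.Folded) (hconn : Γ.Connected) (x₀ : Γ.V)
    (hloops : ∀ i : Fin k, ∃ e : Γ.E, Γ.o e = x₀ ∧ Γ.t e = x₀ ∧ Γ.lab e = i) :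
    ∀ v : Γ.V, v = x₀ := by
  have hstep : ∀ e : Γ.E, (Γ.o e = x₀ → Γ.t e = x₀) ∧ (Γ.t e = x₀ → Γ.o e = x₀) := by
    intro e
    obtain ⟨ℓ, hℓo, hℓt, hℓlab⟩ := hloops (Γ.lab e)
    constructor
    · intro h
      have : e = ℓ := hF e ℓ hℓlab.symm (Or.inl (h.trans hℓo.symm))
      rw [this, hℓt]
    · intro h
      have : e = ℓ := hF e ℓ hℓlab.symm (Or.inr (h.trans hℓt.symm))
      rw [this, hℓo]
  have hwalk : ∀ l : List (Γ.E × Bool), Γ.IsWalk l →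
      (∀ s ∈ l.head?, Γ.stepStart s = x₀) → ∀ s ∈ l, Γ.stepEnd s = x₀ := by
    intro l
    induction l with
    | nil => intro _ _ s hs; simp at hs
    | cons a l ih =>
        intro hwalk hhead s hs
        have ha : Γ.stepStart a = x₀ := hhead a rfl
        have hend : Γ.stepEnd a = x₀ := by
          obtain ⟨e, b⟩ := a
          cases b with
          | true =>
              simp only [stepStart, if_pos rfl] at ha
              simpa [stepEnd] using (hstep e).1 ha
          | false =>
              simp only [stepStart] at ha
              simp only [stepEnd]
              exact (hstep e).2 (by simpa using ha)
        rcases List.mem_cons.1 hs with rfl | hs'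
        · exact hend
        · refine ih hwalk.tail ?_ s hs'
          intro y hy
          have := (List.isChain_cons.1 hwalk).1 y hy
          rw [← this, hend]
  intro v
  obtain ⟨l, hl⟩ := hconn x₀ v
  obtain ⟨h1, h2, h3, h4⟩ := hl
  cases l with
  | nil => exact (h4 rfl).symm
  | cons a t =>
      have hne : a :: t ≠ [] := by simp
      have hlast : (a :: t).getLast? = some ((a :: t).getLast hne) :=
        List.getLast?_eq_getLast hne
      have hv : Γ.stepEnd ((a :: t).getLast hne) = v := h3 _ hlast
      have hx : Γ.stepEnd ((a :: t).getLast hne) = x₀ :=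
        hwalk _ h1 h2 _ (List.getLast_mem hne)
      rw [← hv, hx]

lemma folded_iso {Γ : AGraph k} (hF : Γ.Folded) (hconn : Γ.Connected) (x₀ : Γ.V)
    (hsurj : ∀ g : FreeGroup (Fin k), ∃ l : List (Γ.E × Bool),
      Γ.IsWalkFromTo x₀ x₀ l ∧ FreeGroup.mk (Γ.walkLabel l) = g) :
    Iso Γ (RA k) := by
  have hloops := fun i => exists_loops hF x₀ hsurj i
  have hall := all_eq_base hF hconn x₀ hloops
  refine ⟨⟨fun _ => (), Γ.lab, fun _ => rfl, fun _ => rfl, fun _ => rfl⟩, ⟨?_, ?_⟩, ?_, ?_⟩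
  · intro v v' _; rw [hall v, hall v']
  · intro u; exact ⟨x₀, rfl⟩
  · intro e e' h
    exact hF e e' h (Or.inl (by rw [hall (Γ.o e), hall (Γ.o e')]))
  · intro i
    obtain ⟨e, -, -, hlab⟩ := hloops i
    exact ⟨e, hlab⟩

/-! ### Cardinality decrease -/

lemma card_lt_of_surj_not_inj {α β : Type*} [Finite α] (f : α → β)
    (hs : Function.Surjective f) (a b : α) (hab : a ≠ b) (hf : f a = f b) :
    Nat.card β < Nat.card α := by
  have : Finite β := Finite.of_surjective f hs
  cases nonempty_fintype α
  cases nonempty_fintype β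
  rw [Nat.card_eq_fintype_card, Nat.card_eq_fintype_card]
  exact Fintype.card_lt_of_surjective_not_injective f hs fun hinj => hab (hinj hf)


lemma foldsOntoRA_of_fold {Γ Δ : AGraph k} (hfold : IsFold Γ Δ) (hΔ : Δ.FoldsOntoRA) :
    Γ.FoldsOntoRA := by
  obtain ⟨m, seq, h0, hlast, hstep⟩ := hΔ
  refine ⟨m + 1, Fin.cases Γ seq, ?_, ?_, ?_⟩
  · show Fin.cases (motive := fun _ => AGraph k) Γ seq 0 = Γ
    rw [Fin.cases_zero]
  · show Iso (Fin.cases (motive := fun _ => AGraph k) Γ seq (Fin.last (m + 1))) (RA k)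
    rw [← Fin.succ_last, Fin.cases_succ]
    exact hlast
  · intro i
    induction i using Fin.cases with
    | zero =>
        show IsFold (Fin.cases (motive := fun _ => AGraph k) Γ seq ((0 : Fin (m + 1)).castSucc))
          (Fin.cases (motive := fun _ => AGraph k) Γ seq ((0 : Fin (m + 1)).succ))
        rw [show ((0 : Fin (m + 1)).castSucc) = (0 : Fin (m + 2)) from rfl,
          Fin.cases_zero, Fin.cases_succ, h0]
        exact hfold
    | succ j =>
        show IsFold (Fin.cases (motive := fun _ => AGraph k) Γ seq (j.succ.castSucc))
          (Fin.cases (motive := fun _ => AGraph k) Γ seq (j.succ.succ))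
        rw [← Fin.succ_castSucc, Fin.cases_succ, Fin.cases_succ]
        exact hstep j

lemma transport_hyps {Γ Δ : AGraph k} (φ : Hom Γ Δ) (x₀ : Γ.V)
    (hconn : Γ.Connected)
    (hsurj : ∀ g : FreeGroup (Fin k), ∃ l : List (Γ.E × Bool),
      Γ.IsWalkFromTo x₀ x₀ l ∧ FreeGroup.mk (Γ.walkLabel l) = g)
    (hsurjV : Function.Surjective φ.onV) :
    Δ.Connected ∧ (∀ g : FreeGroup (Fin k), ∃ l : List (Δ.E × Bool),
      Δ.IsWalkFromTo (φ.onV x₀) (φ.onV x₀) l ∧ FreeGroup.mk (Δ.walkLabel l) = g) := by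
  constructor
  · intro v' w'
    obtain ⟨v, rfl⟩ := hsurjV v'
    obtain ⟨w, rfl⟩ := hsurjV w'
    obtain ⟨l, hl⟩ := hconn v w
    exact ⟨l.map φ.mapStep, φ.isWalkFromTo_map hl⟩
  · intro g
    obtain ⟨l, hl, hmk⟩ := hsurj g
    exact ⟨l.map φ.mapStep, φ.isWalkFromTo_map hl, by rw [φ.walkLabel_map, hmk]⟩

/-! ### Main induction -/

lemma main_induction : ∀ (n : ℕ) (Γ : AGraph k) (x₀ : Γ.V), Nat.card Γ.E ≤ n →
    Γ.Connected →
    (∀ g : FreeGroup (Fin k), ∃ l : List (Γ.E × Bool),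
      Γ.IsWalkFromTo x₀ x₀ l ∧ FreeGroup.mk (Γ.walkLabel l) = g) →
    Γ.FoldsOntoRA := by
  intro n
  induction n with
  | zero =>
      intro Γ x₀ hcard hconn hsurj
      have hF : Γ.Folded := by
        intro f f' _ _
        have := Γ.finE
        have : 0 < Nat.card Γ.E := Nat.card_pos_iff.2 ⟨⟨f⟩, inferInstance⟩
        omega
      exact ⟨0, fun _ => Γ, rfl, folded_iso hF hconn x₀ hsurj, fun i => i.elim0⟩
  | succ n ih =>
      intro Γ x₀ hcard hconn hsurj
      by_cases hF : Γ.Folded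
      · exact ⟨0, fun _ => Γ, rfl, folded_iso hF hconn x₀ hsurj, fun i => i.elim0⟩
      · rw [Folded] at hF
        push_neg at hF
        obtain ⟨e₁, e₂, hlab, hot, hne⟩ := hF
        have hEfin := Γ.finE
        rcases hot with ho | ht
        · set Δ := Γ.foldO e₁ e₂ ho hlab with hΔ
          set φ := Γ.foldOHom e₁ e₂ ho hlab with hφ
          have hsurjV : Function.Surjective φ.onV := fun q => Quotient.exists_rep q
          have hsurjE : Function.Surjective φ.onE := fun q => Quotient.exists_rep q
          have hEeq : φ.onE e₁ = φ.onE e₂ :=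
            Quotient.sound (Or.inr (Or.inl ⟨rfl, rfl⟩))
          have hcard' : Nat.card Δ.E < Nat.card Γ.E :=
            card_lt_of_surj_not_inj φ.onE hsurjE e₁ e₂ hne hEeq
          obtain ⟨hconn', hsurj'⟩ := transport_hyps φ x₀ hconn hsurj hsurjV
          exact foldsOntoRA_of_fold (Γ.isFold_foldO e₁ e₂ hne ho hlab)
            (ih Δ (φ.onV x₀) (by omega) hconn' hsurj')
        · set Δ := Γ.foldT e₁ e₂ ht hlab with hΔ
          set φ := Γ.foldTHom e₁ e₂ ht hlab with hφ
          have hsurjV : Function.Surjective φ.onV := fun q => Quotient.exists_rep q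
          have hsurjE : Function.Surjective φ.onE := fun q => Quotient.exists_rep q
          have hEeq : φ.onE e₁ = φ.onE e₂ :=
            Quotient.sound (Or.inr (Or.inl ⟨rfl, rfl⟩))
          have hcard' : Nat.card Δ.E < Nat.card Γ.E :=
            card_lt_of_surj_not_inj φ.onE hsurjE e₁ e₂ hne hEeq
          obtain ⟨hconn', hsurj'⟩ := transport_hyps φ x₀ hconn hsurj hsurjV
          exact foldsOntoRA_of_fold (Γ.isFold_foldT e₁ e₂ hne ht hlab)
            (ih Δ (φ.onV x₀) (by omega) hconn' hsurj')

end AGraph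

theorem statement13 (k : ℕ) (Γ : AGraph k) (hconn : Γ.Connected) (x₀ : Γ.V)
    (hsurj : ∀ g : FreeGroup (Fin k), ∃ l : List (Γ.E × Bool),
      Γ.IsWalkFromTo x₀ x₀ l ∧ FreeGroup.mk (Γ.walkLabel l) = g) :
    AGraph.FoldsOntoRA Γ := by
  exact AGraph.main_induction (Nat.card Γ.E) Γ x₀ le_rfl hconn hsurj
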